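/- Let h : ℝⁿ → ℝⁿ be C¹ with bounded derivative, F_d = id + d·h, A_d = (DF_d)^{-T} and I_d = det DF_d, and M_d = I_d A_dᵀ A_d. Then d ↦ M_d(x) is differentiable at d = 0 with derivative M = I·div h(x) − ∇h(x) − (∇h(x))ᵀ, for each x. -/

import Mathlib

open Matrix

section Helpers

variable {n : ℕ}

attribute [local instance] Matrix.linftyOpNormedRing Matrix.linftyOpNormedAlgebra

noncomputable def entryCLM (i j : Fin n) : Matrix (Fin n) (Fin n) ℝ →L[ℝ] ℝ :=
  LinearMap.toContinuousLinearMap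
    { toFun := fun A => A i j, map_add' := fun _ _ => rfl, map_smul' := fun _ _ => rfl }

lemma hasDerivAt_inv_entry (J : Matrix (Fin n) (Fin n) ℝ) (i k : Fin n) :
    HasDerivAt (fun d : ℝ => ((1 : Matrix (Fin n) (Fin n) ℝ) + d • J.transpose)⁻¹ i k)
      (-(J.transpose i k)) 0 := by
  have h1 : HasDerivAt (fun d : ℝ => (1 : Matrix (Fin n) (Fin n) ℝ) + d • J.transpose)
      J.transpose 0 := by
    exact ((hasDerivAt_id' (x := (0:ℝ))).smul_const J.transpose).const_add
      (1 : Matrix (Fin n) (Fin n) ℝ) |>.congr_deriv (one_smul _ _)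
  have h2 : HasFDerivAt (Ring.inverse : Matrix (Fin n) (Fin n) ℝ → Matrix (Fin n) (Fin n) ℝ)
      (-((ContinuousLinearMap.mulLeftRight ℝ _) 1 1)) ((1 : Matrix (Fin n) (Fin n) ℝ) + (0:ℝ) • J.transpose) := by
    have := hasFDerivAt_ringInverse (𝕜 := ℝ) (1 : (Matrix (Fin n) (Fin n) ℝ)ˣ)
    simpa using this
  have h3 : HasDerivAt (fun d : ℝ => Ring.inverse ((1 : Matrix (Fin n) (Fin n) ℝ) + d • J.transpose))
      (-J.transpose) 0 := by
    have := h2.comp_hasDerivAt 0 h1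
    simp only [ContinuousLinearMap.neg_apply, ContinuousLinearMap.mulLeftRight_apply, one_mul,
      mul_one] at this
    exact this
  have h4 := (entryCLM i k).hasFDerivAt.comp_hasDerivAt 0 h3
  simp only [← Matrix.nonsing_inv_eq_ringInverse] at h4
  exact h4

lemma hasDerivAt_det' (J : Matrix (Fin n) (Fin n) ℝ) :
    HasDerivAt (fun d : ℝ => ((1 : Matrix (Fin n) (Fin n) ℝ) + d • J.transpose).det) J.trace 0 := by
  set Q := ((1 + (Polynomial.X : Polynomial ℝ) • J.transpose.map Polynomial.C).det).divX.divX with hQ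
  have heq : (fun d : ℝ => ((1 : Matrix (Fin n) (Fin n) ℝ) + d • J.transpose).det)
      = fun d : ℝ => 1 + J.transpose.trace * d + Q.eval d * d ^ 2 :=
    funext fun d => Matrix.det_one_add_smul d J.transpose
  rw [heq]
  have hA : HasDerivAt (fun d : ℝ => J.transpose.trace * d) J.transpose.trace 0 := by
    simpa using (hasDerivAt_id (0:ℝ)).const_mul J.transpose.trace
  have hB : HasDerivAt (fun d : ℝ => Q.eval d * d ^ 2) 0 0 := by
    simpa using (Q.hasDerivAt 0).fun_mul (hasDerivAt_pow 2 0)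
  simpa [Matrix.trace_transpose] using (hA.const_add 1).fun_add hB

end Helpers

section Key

variable {n : ℕ}

lemma key_entry (J : Matrix (Fin n) (Fin n) ℝ) (i j : Fin n) :
    HasDerivAt (fun d : ℝ =>
      (((1 : Matrix (Fin n) (Fin n) ℝ) + d • J.transpose).det •
        (((1 : Matrix (Fin n) (Fin n) ℝ) + d • J.transpose)⁻¹ *
          (((1 : Matrix (Fin n) (Fin n) ℝ) + d • J.transpose)⁻¹).transpose)) i j)
      ((J.trace • (1 : Matrix (Fin n) (Fin n) ℝ) - J - J.transpose) i j) 0 := by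
  simp only [Matrix.smul_apply, Matrix.mul_apply, Matrix.transpose_apply, smul_eq_mul]
  have hval : ∀ a b : Fin n, ((1 : Matrix (Fin n) (Fin n) ℝ) + (0:ℝ) • J.transpose)⁻¹ a b
      = (1 : Matrix (Fin n) (Fin n) ℝ) a b := by
    intro a b; simp
  have hsum : HasDerivAt (fun d : ℝ => ∑ k, ((1 : Matrix (Fin n) (Fin n) ℝ) + d • J.transpose)⁻¹ i k *
      ((1 : Matrix (Fin n) (Fin n) ℝ) + d • J.transpose)⁻¹ j k)
      (∑ k, (-(J.transpose i k) * (1 : Matrix (Fin n) (Fin n) ℝ) j k +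
        (1 : Matrix (Fin n) (Fin n) ℝ) i k * -(J.transpose j k))) 0 := by
    refine HasDerivAt.fun_sum fun k _ => ?_
    have := (hasDerivAt_inv_entry J i k).fun_mul (hasDerivAt_inv_entry J j k)
    rw [hval, hval] at this
    exact this
  have h := (hasDerivAt_det' J).fun_mul hsum
  rw [show ((1 : Matrix (Fin n) (Fin n) ℝ) + (0:ℝ) • J.transpose).det = 1 by simp] at h
  convert h using 1
  · rfl
  · rfl
  simp [Matrix.one_apply, Matrix.sub_apply, Matrix.smul_apply, mul_ite, ite_mul,
    Finset.sum_add_distrib, Finset.sum_ite_eq, Finset.sum_ite_eq', smul_eq_mul]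
  ring

end Key

theorem hasDerivAt_pi_of {ι : Type*} [Fintype ι] {E : ι → Type*} [∀ i, NormedAddCommGroup (E i)]
    [∀ i, NormedSpace ℝ (E i)] {f : ℝ → ∀ i, E i} {f' : ∀ i, E i} {x : ℝ}
    (hf : ∀ i, HasDerivAt (fun t => f t i) (f' i) x) : HasDerivAt f f' x := by
  have h : HasFDerivAt f
      (ContinuousLinearMap.pi fun i => (1 : ℝ →L[ℝ] ℝ).smulRight (f' i)) x :=
    hasFDerivAt_pi.2 fun i => (hf i).hasFDerivAt
  have := h.hasDerivAt
  simpa using this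

attribute [local instance] Matrix.normedAddCommGroup Matrix.normedSpace

lemma hasDerivAt_matrix {m : ℕ} {f : ℝ → Matrix (Fin m) (Fin m) ℝ}
    {f' : Matrix (Fin m) (Fin m) ℝ} {x : ℝ}
    (hf : ∀ i j, HasDerivAt (fun t => f t i j) (f' i j) x) : HasDerivAt f f' x :=
  hasDerivAt_pi_of fun i => hasDerivAt_pi_of fun j => hf i j

/-- d ↦ M_d(x) = I_d A_dᵀ A_d is differentiable at d = 0 with derivative
M = I div h − ∇h − (∇h)ᵀ. Here DF_d = I + d(∇h)ᵀ, A_d = (DF_d)^{−T}, I_d = det DF_d. -/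
theorem stmt_10 {n : ℕ} (h : EuclideanSpace ℝ (Fin n) → EuclideanSpace ℝ (Fin n))
    (hh : ContDiff ℝ 1 h) (hbdd : ∃ M, ∀ x, ‖fderiv ℝ h x‖ ≤ M)
    (x : EuclideanSpace ℝ (Fin n)) :
    let J : Matrix (Fin n) (Fin n) ℝ :=
      Matrix.of fun i j => fderiv ℝ h x (EuclideanSpace.single j 1) i
    HasDerivAt
      (fun d : ℝ =>
        ((1 : Matrix (Fin n) (Fin n) ℝ) + d • J.transpose).det •
          (((1 : Matrix (Fin n) (Fin n) ℝ) + d • J.transpose)⁻¹ *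
            (((1 : Matrix (Fin n) (Fin n) ℝ) + d • J.transpose)⁻¹).transpose))
      (J.trace • (1 : Matrix (Fin n) (Fin n) ℝ) - J - J.transpose) 0 := by
  intro J
  exact hasDerivAt_matrix fun i j => key_entry J i j
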